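/- Let G be a finite group with S ∈ Syl_p(G). The restriction homomorphism from the group of automorphisms of G normalizing S to Aut(S) induces: (a) the map κ̄_G : Out(G) → Out(S, F_S(G)) is surjective if and only if every fusion-preserving automorphism φ ∈ Aut(S, F_S(G)) extends to an automorphism of G; and (b) Ker(κ̄_G) ≅ C_{Aut(G)}(S)/Aut_{C_G(S)}(G). -/

import Mathlib

/-! Automorphisms of fusion systems: the homomorphism `κ̄_G : Out(G) → Out(S, F_S(G))`. -/

section Defs

variable {G : Type*} [Group G]

/-- One direction of fusion preservation for an automorphism `φ` of `S ≤ G`: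
`φ ∘ Hom_G(A, B) ∘ φ⁻¹ ⊆ Hom_G(φA, φB)` for all `A, B ≤ S`, expressed elementwise. -/
def FusionPreservingAux (S : Subgroup G) (φ : S ≃* S) : Prop :=
  ∀ (g : G) (A : Subgroup G) (hA : A ≤ S) (hgA : ∀ a ∈ A, g * a * g⁻¹ ∈ S),
    ∃ h : G, ∀ (a : G) (ha : a ∈ A),
      ((φ ⟨g * a * g⁻¹, hgA a ha⟩ : S) : G) = h * ((φ ⟨a, hA ha⟩ : S) : G) * h⁻¹

/-- `φ ∈ Aut(S)` is fusion preserving with respect to `F_S(G)`: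
`φ ∘ Hom_G(A, B) ∘ φ⁻¹ = Hom_G(φA, φB)` for all `A, B ≤ S`. -/
def IsFusionPreserving (S : Subgroup G) (φ : S ≃* S) : Prop :=
  FusionPreservingAux S φ ∧ FusionPreservingAux S φ.symm

/-- The subgroup `Inn(G) ≤ Aut(G)` of inner automorphisms. -/
def Inn (G : Type*) [Group G] : Subgroup (MulAut G) :=
  (MulAut.conj : G →* MulAut G).range

instance Inn.normal : (Inn G).Normal := by
  constructor
  rintro x ⟨g, rfl⟩ α
  refine ⟨α g, ?_⟩
  ext y
  simp [MulAut.conj_apply, mul_assoc]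

/-- `C_{Aut(G)}(S)`: the automorphisms of `G` restricting to the identity on `S`. -/
def fixAut (S : Subgroup G) : Subgroup (MulAut G) where
  carrier := {α | ∀ x ∈ S, α x = x}
  one_mem' := fun x _ => rfl
  mul_mem' := by
    intro a b ha hb x hx
    have h : (a * b) x = a (b x) := rfl
    rw [h, hb x hx, ha x hx]
  inv_mem' := by
    intro a ha x hx
    calc a⁻¹ x = a⁻¹ (a x) := by rw [ha x hx]
    _ = x := by simp

/-- `Aut_{C_G(S)}(G)`: the automorphisms of `G` given by conjugation by elements of
`C_G(S)`. -/
def innC (S : Subgroup G) : Subgroup (MulAut G) :=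
  (Subgroup.centralizer (S : Set G)).map (MulAut.conj : G →* MulAut G)

theorem innC_le_fixAut (S : Subgroup G) : innC S ≤ fixAut S := by
  rintro _ ⟨c, hc, rfl⟩ x hx
  have h := (Subgroup.mem_centralizer_iff.mp hc) x hx
  show c * x * c⁻¹ = x
  rw [mul_inv_eq_iff_eq_mul, ← h]

instance innC_subgroupOf_normal {S : Subgroup G} : ((innC S).subgroupOf (fixAut S)).Normal := by
  constructor
  intro x hx α
  rw [Subgroup.mem_subgroupOf] at hx ⊢
  obtain ⟨c, hc, hconj⟩ := hx
  replace hc : c ∈ Subgroup.centralizer (S : Set G) := hc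
  refine ⟨(α : MulAut G) c, ?_, ?_⟩
  · show (α : MulAut G) c ∈ Subgroup.centralizer (S : Set G)
    rw [Subgroup.mem_centralizer_iff]
    intro y hy
    have hy' : (α : MulAut G) y = y := α.2 y hy
    have h := (Subgroup.mem_centralizer_iff.mp hc) y hy
    calc y * (α : MulAut G) c = (α : MulAut G) y * (α : MulAut G) c := by rw [hy']
    _ = (α : MulAut G) (y * c) := by rw [map_mul]
    _ = (α : MulAut G) (c * y) := by rw [h]
    _ = (α : MulAut G) c * (α : MulAut G) y := by rw [map_mul]
    _ = (α : MulAut G) c * y := by rw [hy']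
  · have : ((α * x * α⁻¹ : fixAut S) : MulAut G)
        = (α : MulAut G) * (x : MulAut G) * (α : MulAut G)⁻¹ := rfl
    rw [this, ← hconj]
    ext y
    simp [MulAut.conj_apply, mul_assoc]

/-- The normalizer of `S` is preserved by any automorphism preserving `S`. -/
theorem fusion_aux_norm (S : Subgroup G) (α : MulAut G) (hα : ∀ x : G, x ∈ S ↔ α x ∈ S)
    {n : G} (hn : n ∈ Subgroup.normalizer (S : Set G)) : α n ∈ Subgroup.normalizer (S : Set G) := by
  rw [Subgroup.mem_normalizer_iff] at hn ⊢
  intro h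
  have key : ∀ y : G, α n * α y * (α n)⁻¹ = α (n * y * n⁻¹) := by
    intro y; rw [map_mul, map_mul, map_inv]
  constructor
  · intro hh
    have h1 : α.symm h ∈ S := by
      rw [hα (α.symm h)]
      simpa using hh
    have h2 : n * α.symm h * n⁻¹ ∈ S := (hn _).mp h1
    have h3 := (hα _).mp h2
    rw [← key] at h3
    simpa using h3
  · intro hh
    have h1 : α.symm h ∈ S := by
      have h2 : n * α.symm h * n⁻¹ ∈ S := by
        rw [hα (n * α.symm h * n⁻¹), ← key]
        simpa using hh
      exact (hn _).mpr h2
    rw [hα (α.symm h)] at h1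
    simpa using h1

/-- Automorphisms of `G` preserving `S` whose restriction to `S` lies in `Aut_{N_G(S)}(S)`;
the kernel of `κ̄_G` is the image of this subgroup in `Out(G)`. -/
def kerAux (S : Subgroup G) : Subgroup (MulAut G) where
  carrier := {α | (∀ x : G, x ∈ S ↔ α x ∈ S) ∧
    ∃ n ∈ Subgroup.normalizer (S : Set G), ∀ x ∈ S, α x = n * x * n⁻¹}
  one_mem' := ⟨fun _ => Iff.rfl, 1, (Subgroup.normalizer (S : Set G)).one_mem, fun x _ => by simp⟩
  mul_mem' := by
    rintro a b ⟨ha1, na, hna, ha2⟩ ⟨hb1, nb, hnb, hb2⟩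
    constructor
    · intro x
      have h : (a * b) x = a (b x) := rfl
      rw [h]
      exact (hb1 x).trans (ha1 (b x))
    · refine ⟨na * nb, (Subgroup.normalizer (S : Set G)).mul_mem hna hnb, ?_⟩
      intro x hx
      have hmem : nb * x * nb⁻¹ ∈ S := (Subgroup.mem_normalizer_iff.mp hnb x).mp hx
      have h : (a * b) x = a (b x) := rfl
      rw [h, hb2 x hx, ha2 _ hmem]
      group
  inv_mem' := by
    rintro a ⟨ha1, na, hna, ha2⟩
    have hinv : ∀ x : G, x ∈ S ↔ a⁻¹ x ∈ S := by
      intro x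
      have h := ha1 (a⁻¹ x)
      have h2 : a (a⁻¹ x) = x := by simp
      rw [h2] at h
      exact h.symm
    constructor
    · exact hinv
    · refine ⟨na⁻¹, (Subgroup.normalizer (S : Set G)).inv_mem hna, ?_⟩
      intro x hx
      have hm : na⁻¹ * x * na⁻¹⁻¹ ∈ S :=
        (Subgroup.mem_normalizer_iff.mp ((Subgroup.normalizer (S : Set G)).inv_mem hna) x).mp hx
      apply a.injective
      have h2 : a (a⁻¹ x) = x := by simp
      rw [h2, ha2 _ hm]
      group

end Defs


section Aux
variable {G : Type*} [Group G]

theorem fixAut_le_kerAux (S : Subgroup G) : fixAut S ≤ kerAux S := by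
  intro b hb
  refine ⟨?_, 1, (Subgroup.normalizer (S : Set G)).one_mem, fun x hx => by simp [hb x hx]⟩
  intro x
  constructor
  · intro hx; rw [hb x hx]; exact hx
  · intro hx
    have h1 := (fixAut S).inv_mem hb (b x) hx
    have h2 : (b⁻¹ : MulAut G) (b x) = x := b.symm_apply_apply x
    rw [h2] at h1; rw [h1]; exact hx

end Aux

/-- Let `G` be a finite group with `S ∈ Syl_p(G)`.  Then:
(a) `κ̄_G : Out(G) → Out(S, F_S(G))` is surjective if and only if every fusion preserving
automorphism of `S` extends to an automorphism of `G`; and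
(b) `Ker(κ̄_G) ≅ C_{Aut(G)}(S) / Aut_{C_G(S)}(G)`. -/
theorem stmt_12 (p : ℕ) [Fact p.Prime] (G : Type*) [Group G] [Finite G] (S : Sylow p G) :
    -- (a): surjectivity of `κ̄_G` ↔ every fusion preserving automorphism extends
    ((∀ φ : ↥(S : Subgroup G) ≃* ↥(S : Subgroup G), IsFusionPreserving (S : Subgroup G) φ →
        ∃ (α : MulAut G) (n : G) (hn : n ∈ Subgroup.normalizer ((S : Subgroup G) : Set G)),
          (∀ x : G, x ∈ (S : Subgroup G) ↔ α x ∈ (S : Subgroup G)) ∧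
          ∀ (x : G) (hx : x ∈ (S : Subgroup G)),
            α x = ((φ ⟨n * x * n⁻¹,
              (Subgroup.mem_normalizer_iff.mp hn x).mp hx⟩ : ↥(S : Subgroup G)) : G)) ↔
      (∀ φ : ↥(S : Subgroup G) ≃* ↥(S : Subgroup G), IsFusionPreserving (S : Subgroup G) φ →
        ∃ α : MulAut G, ∀ (x : G) (hx : x ∈ (S : Subgroup G)),
          α x = ((φ ⟨x, hx⟩ : ↥(S : Subgroup G)) : G))) ∧
    -- (b): `Ker(κ̄_G) ≅ C_{Aut(G)}(S) / Aut_{C_G(S)}(G)`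
    Nonempty
      (↥((kerAux (S : Subgroup G)).map (QuotientGroup.mk' (Inn G))) ≃*
        (↥(fixAut (S : Subgroup G)) ⧸
          (innC (S : Subgroup G)).subgroupOf (fixAut (S : Subgroup G)))) := by
  constructor
  · constructor
    · intro H φ hφ
      obtain ⟨α, n, hn, hiff, hval⟩ := H φ hφ
      refine ⟨α * MulAut.conj n⁻¹, ?_⟩
      intro x hx
      have hx' : n⁻¹ * x * n⁻¹⁻¹ ∈ (S : Subgroup G) :=
        (Subgroup.mem_normalizer_iff.mp ((Subgroup.normalizer ((S : Subgroup G) : Set G)).inv_mem hn) x).mp hx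
      have h1 : (α * MulAut.conj n⁻¹) x = α (n⁻¹ * x * n⁻¹⁻¹) := rfl
      rw [h1, hval _ hx']
      exact congrArg (fun s : ↥(S : Subgroup G) => ((φ s : ↥(S : Subgroup G)) : G))
        (Subtype.ext (by group))
    · intro H φ hφ
      obtain ⟨α, hval⟩ := H φ hφ
      refine ⟨α, 1, (Subgroup.normalizer ((S : Subgroup G) : Set G)).one_mem, ?_, ?_⟩
      · have hfin : (((S : Subgroup G) : Set G)).Finite := Set.toFinite _
        have hmaps : Set.MapsTo α ((S : Subgroup G) : Set G) ((S : Subgroup G) : Set G) := by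
          intro x hx
          have := hval x hx
          simp only [Set.mem_setOf_eq, SetLike.mem_coe] at *
          rw [this]
          exact (φ ⟨x, hx⟩).2
        have hinj : Set.InjOn α ((S : Subgroup G) : Set G) := fun a _ b _ h => α.injective h
        have hbij := (hfin.injOn_iff_bijOn_of_mapsTo hmaps).mp hinj
        intro x
        constructor
        · intro hx; exact hmaps hx
        · intro hx
          obtain ⟨y, hy, hxy⟩ := hbij.surjOn hx
          have : y = x := α.injective hxy
          rwa [← this]
      · intro x hx
        rw [hval x hx]
        exact congrArg (fun s : ↥(S : Subgroup G) => ((φ s : ↥(S : Subgroup G)) : G))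
          (Subtype.ext (by group))
  · have hle : fixAut (S : Subgroup G) ≤ kerAux (S : Subgroup G) := fixAut_le_kerAux _
    have hmem : ∀ β : fixAut (S : Subgroup G),
        QuotientGroup.mk' (Inn G) (β : MulAut G) ∈
          (kerAux (S : Subgroup G)).map (QuotientGroup.mk' (Inn G)) :=
      fun β => ⟨β, hle β.2, rfl⟩
    let f := ((QuotientGroup.mk' (Inn G)).comp
      (fixAut (S : Subgroup G)).subtype).codRestrict
      ((kerAux (S : Subgroup G)).map (QuotientGroup.mk' (Inn G))) hmem
    have hsurj : Function.Surjective f := by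
      rintro ⟨q, α, hα, rfl⟩
      obtain ⟨hiff, n, hn, hval⟩ := hα
      have hβ : (MulAut.conj n)⁻¹ * α ∈ fixAut (S : Subgroup G) := by
        intro x hx
        have h1 : ((MulAut.conj n)⁻¹ * α) x = (MulAut.conj n)⁻¹ (α x) := rfl
        rw [h1, hval x hx, ← map_inv MulAut.conj n]
        show n⁻¹ * (n * x * n⁻¹) * n⁻¹⁻¹ = x
        group
      refine ⟨⟨(MulAut.conj n)⁻¹ * α, hβ⟩, ?_⟩
      apply Subtype.ext
      show QuotientGroup.mk' (Inn G) ((MulAut.conj n)⁻¹ * α) = QuotientGroup.mk' (Inn G) α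
      rw [map_mul, map_inv]
      have h1 : QuotientGroup.mk' (Inn G) (MulAut.conj n) = 1 :=
        (QuotientGroup.eq_one_iff _).mpr ⟨n, rfl⟩
      rw [h1]; simp
    have hker : f.ker = (innC (S : Subgroup G)).subgroupOf (fixAut (S : Subgroup G)) := by
      ext β
      rw [MonoidHom.mem_ker, Subgroup.mem_subgroupOf]
      constructor
      · intro h
        have h1 : QuotientGroup.mk' (Inn G) (β : MulAut G) = 1 := congrArg Subtype.val h
        obtain ⟨g, hg⟩ := (QuotientGroup.eq_one_iff _).mp h1
        refine ⟨g, ?_, hg⟩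
        show g ∈ Subgroup.centralizer (((S : Subgroup G)) : Set G)
        rw [Subgroup.mem_centralizer_iff]
        intro y hy
        have h2 : g * y * g⁻¹ = y := by
          have := β.2 y hy
          rw [← hg] at this
          exact this
        have h3 : g * y = y * g := by
          rw [mul_inv_eq_iff_eq_mul] at h2; exact h2
        exact h3.symm
      · rintro ⟨c, hc, hconj⟩
        apply Subtype.ext
        show QuotientGroup.mk' (Inn G) (β : MulAut G) = 1
        exact (QuotientGroup.eq_one_iff _).mpr ⟨c, hconj⟩
    exact ⟨((QuotientGroup.quotientMulEquivOfEq hker.symm).trans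
      (QuotientGroup.quotientKerEquivOfSurjective f hsurj)).symm⟩
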